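/- If M_λ(t) = det(I − 2tC)^{−1/2}·exp(−(1/2)mᵀ[I − (I − 2tC)^{−1}]C^{−1}m) with C a 2×2 symmetric positive-definite matrix and m ∈ ℝ², and P(ρ) = (1/12)·M_λ(−ρ/4) + (1/4)·M_λ(−ρ/3) for ρ > 0, then lim_{ρ→∞} −log P(ρ)/log ρ = 1. -/

import Mathlib

open Real Filter Matrix

theorem diversity_order_one
    (C : Matrix (Fin 2) (Fin 2) ℝ) (hCsymm : C.IsSymm) (hCpd : C.PosDef)
    (m : Fin 2 → ℝ)
    (M : ℝ → ℝ)
    (hM : ∀ t : ℝ, M t = (1 - (2 * t) • C).det ^ (-(1 / 2) : ℝ)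
        * Real.exp (-(1 / 2) * (m ⬝ᵥ ((1 - (1 - (2 * t) • C)⁻¹) *ᵥ (C⁻¹ *ᵥ m)))))
    (P : ℝ → ℝ)
    (hP : ∀ ρ : ℝ, P ρ = (1 / 12) * M (-ρ / 4) + (1 / 4) * M (-ρ / 3)) :
    Tendsto (fun ρ : ℝ => -Real.log (P ρ) / Real.log ρ) atTop (nhds 1) := by
  have hd : 0 < C.det := hCpd.det_pos
  have h00 : 0 < C 0 0 := by
    exact hCpd.diag_pos
  have h11 : 0 < C 1 1 := by
    exact hCpd.diag_pos
  -- determinant formulas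
  have detf : ∀ s : ℝ, (1 + s • C).det = 1 + s * (C 0 0 + C 1 1) + s ^ 2 * C.det := by
    intro s
    simp [Matrix.det_fin_two, Matrix.add_apply, Matrix.smul_apply, Matrix.one_apply]
    ring
  have detpos : ∀ s : ℝ, 0 ≤ s → 0 < (1 + s • C).det := by
    intro s hs; rw [detf]; nlinarith [sq_nonneg s]
  have detg : ∀ r : ℝ, (r • (1 : Matrix (Fin 2) (Fin 2) ℝ) + C).det
      = C.det + r * (C 0 0 + C 1 1) + r ^ 2 := by
    intro r
    simp [Matrix.det_fin_two, Matrix.add_apply, Matrix.smul_apply, Matrix.one_apply]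
    ring
  have detgpos : ∀ r : ℝ, 0 ≤ r → 0 < (r • (1 : Matrix (Fin 2) (Fin 2) ℝ) + C).det := by
    intro r hr; rw [detg]; nlinarith [sq_nonneg r]
  -- the inverse tends to zero
  have hid : ∀ s : ℝ, 0 < s →
      (1 + s • C)⁻¹ = s⁻¹ • (s⁻¹ • (1 : Matrix (Fin 2) (Fin 2) ℝ) + C)⁻¹ := by
    intro s hs
    apply Matrix.inv_eq_right_inv
    have hB : (s⁻¹ • (1 : Matrix (Fin 2) (Fin 2) ℝ) + C) *
        (s⁻¹ • (1 : Matrix (Fin 2) (Fin 2) ℝ) + C)⁻¹ = 1 :=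
      Matrix.mul_nonsing_inv _ ((detgpos s⁻¹ (by positivity)).ne'.isUnit)
    have h1 : (1 : Matrix (Fin 2) (Fin 2) ℝ) + s • C
        = s • (s⁻¹ • (1 : Matrix (Fin 2) (Fin 2) ℝ) + C) := by
      rw [smul_add, smul_smul, mul_inv_cancel₀ hs.ne', one_smul]
    rw [h1, Matrix.mul_smul, Matrix.smul_mul, hB, smul_smul,
      inv_mul_cancel₀ hs.ne', one_smul]
  have hinv : Tendsto (fun s : ℝ => (1 + s • C)⁻¹) atTop
      (nhds (0 : Matrix (Fin 2) (Fin 2) ℝ)) := by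
    have hBc : Tendsto (fun s : ℝ => (s⁻¹ • (1 : Matrix (Fin 2) (Fin 2) ℝ) + C)⁻¹) atTop
        (nhds C⁻¹) := by
      have h1 : Tendsto (fun s : ℝ => s⁻¹ • (1 : Matrix (Fin 2) (Fin 2) ℝ) + C) atTop
          (nhds C) := by
        have h0 := (tendsto_inv_atTop_zero (𝕜 := ℝ)).smul_const (1 : Matrix (Fin 2) (Fin 2) ℝ)
        rw [zero_smul] at h0
        simpa using h0.add_const C
      have h2 : ContinuousAt Inv.inv C :=
        continuousAt_matrix_inv C (by rw [Ring.inverse_eq_inv']; exact continuousAt_inv₀ hd.ne')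
      exact h2.tendsto.comp h1
    have h := (tendsto_inv_atTop_zero (𝕜 := ℝ)).smul hBc
    rw [zero_smul] at h
    apply h.congr'
    filter_upwards [eventually_gt_atTop (0 : ℝ)] with s hs using (hid s hs).symm
  -- the function F
  set v : Fin 2 → ℝ := C⁻¹ *ᵥ m with hv
  set F : ℝ → ℝ := fun s => (1 + s • C).det ^ (-(1 / 2) : ℝ)
      * Real.exp (-(1 / 2) * (m ⬝ᵥ ((1 - (1 + s • C)⁻¹) *ᵥ v))) with hF_def
  set E : ℝ := -(1 / 2) * (m ⬝ᵥ v) with hE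
  set L0 : ℝ := C.det ^ (-(1 / 2) : ℝ) * Real.exp E with hL0
  have hL0pos : 0 < L0 := mul_pos (Real.rpow_pos_of_pos hd _) (Real.exp_pos _)
  have hFpos : ∀ s : ℝ, 0 ≤ s → 0 < F s := fun s hs =>
    mul_pos (Real.rpow_pos_of_pos (detpos s hs) _) (Real.exp_pos _)
  -- rewrite M in terms of F
  have hMF4 : ∀ ρ : ℝ, M (-ρ / 4) = F (ρ / 2) := by
    intro ρ
    rw [hM]
    have hmat : (1 : Matrix (Fin 2) (Fin 2) ℝ) - (2 * (-ρ / 4)) • C = 1 + (ρ / 2) • C := by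
      rw [show (2 * (-ρ / 4) : ℝ) = -(ρ / 2) by ring, neg_smul, sub_neg_eq_add]
    rw [hmat, hF_def]
  have hMF3 : ∀ ρ : ℝ, M (-ρ / 3) = F (2 * ρ / 3) := by
    intro ρ
    rw [hM]
    have hmat : (1 : Matrix (Fin 2) (Fin 2) ℝ) - (2 * (-ρ / 3)) • C = 1 + (2 * ρ / 3) • C := by
      rw [show (2 * (-ρ / 3) : ℝ) = -(2 * ρ / 3) by ring, neg_smul, sub_neg_eq_add]
    rw [hmat, hF_def]
  -- the exponential part converges
  have hexp : Tendsto (fun s : ℝ => Real.exp (-(1 / 2) * (m ⬝ᵥ ((1 - (1 + s • C)⁻¹) *ᵥ v))))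
      atTop (nhds (Real.exp E)) := by
    have expc : Continuous fun A : Matrix (Fin 2) (Fin 2) ℝ => m ⬝ᵥ (A *ᵥ v) :=
      Continuous.dotProduct continuous_const
        (Continuous.matrix_mulVec continuous_id continuous_const)
    have hone : Tendsto (fun s : ℝ => (1 : Matrix (Fin 2) (Fin 2) ℝ) - (1 + s • C)⁻¹) atTop
        (nhds 1) := by
      simpa using tendsto_const_nhds.sub hinv
    have hdot : Tendsto (fun s : ℝ => m ⬝ᵥ ((1 - (1 + s • C)⁻¹) *ᵥ v)) atTop
        (nhds (m ⬝ᵥ v)) := by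
      have := (expc.tendsto 1).comp hone
      simpa only [Function.comp_def, Matrix.one_mulVec] using this
    exact (Real.continuous_exp.tendsto _).comp (hdot.const_mul _)
  -- the power part converges
  have hratio : Tendsto (fun s : ℝ => (1 + s • C).det / s ^ 2) atTop (nhds C.det) := by
    have h := tendsto_inv_atTop_zero (𝕜 := ℝ)
    have h' : Tendsto (fun s : ℝ => (s⁻¹) ^ 2 + (C 0 0 + C 1 1) * s⁻¹ + C.det) atTop
        (nhds C.det) := by
      have := ((h.pow 2).add (h.const_mul (C 0 0 + C 1 1))).add_const C.det
      simpa using this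
    apply h'.congr'
    filter_upwards [eventually_gt_atTop (0 : ℝ)] with s hs
    rw [detf]
    field_simp
  have hpow : Tendsto (fun s : ℝ => s * (1 + s • C).det ^ (-(1 / 2) : ℝ)) atTop
      (nhds (C.det ^ (-(1 / 2) : ℝ))) := by
    have h := hratio.rpow_const (p := (-(1 / 2) : ℝ)) (Or.inl hd.ne')
    apply h.congr'
    filter_upwards [eventually_gt_atTop (0 : ℝ)] with s hs
    have hsq : ((s ^ 2 : ℝ)) ^ (-(1 / 2) : ℝ) = s⁻¹ := by
      rw [← Real.rpow_natCast s 2, ← Real.rpow_mul hs.le]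
      norm_num [Real.rpow_neg_one]
    rw [Real.div_rpow (detpos s hs.le).le (sq_nonneg s), hsq, div_inv_eq_mul, mul_comm]
  -- combine: s * F s converges to L0
  have hG : Tendsto (fun s : ℝ => s * F s) atTop (nhds L0) := by
    have := hpow.mul hexp
    apply this.congr
    intro s
    simp only [hF_def]
    ring
  -- compose with the two scalings
  have hcomp1 : Tendsto (fun ρ : ℝ => ρ / 2) atTop atTop :=
    tendsto_id.atTop_div_const (by norm_num)
  have hcomp2 : Tendsto (fun ρ : ℝ => 2 * ρ / 3) atTop atTop :=
    (tendsto_id.const_mul_atTop (by norm_num : (0 : ℝ) < 2)).atTop_div_const (by norm_num)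
  set L : ℝ := 1 / 6 * L0 + 3 / 8 * L0 with hL
  have hLpos : 0 < L := by rw [hL]; nlinarith
  have hρP : Tendsto (fun ρ : ℝ => ρ * P ρ) atTop (nhds L) := by
    have h1 := hG.comp hcomp1
    have h2 := hG.comp hcomp2
    have h3 := (h1.const_mul (1 / 6 : ℝ)).add (h2.const_mul (3 / 8 : ℝ))
    apply h3.congr
    intro ρ
    simp only [Function.comp]
    rw [hP ρ, hMF4 ρ, hMF3 ρ]
    ring
  -- conclude
  have hlog : Tendsto (fun ρ : ℝ => Real.log (ρ * P ρ)) atTop (nhds (Real.log L)) :=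
    ((Real.continuousAt_log hLpos.ne').tendsto).comp hρP
  have hdiv : Tendsto (fun ρ : ℝ => Real.log (ρ * P ρ) / Real.log ρ) atTop (nhds 0) :=
    hlog.div_atTop Real.tendsto_log_atTop
  have hfin : Tendsto (fun ρ : ℝ => 1 - Real.log (ρ * P ρ) / Real.log ρ) atTop (nhds 1) := by
    simpa using (tendsto_const_nhds (x := (1 : ℝ)) (f := atTop)).sub hdiv
  apply hfin.congr'
  filter_upwards [eventually_gt_atTop (1 : ℝ)] with ρ hρ
  have hρ0 : 0 < ρ := lt_trans one_pos hρ
  have hPρ : 0 < P ρ := by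
    rw [hP ρ, hMF4 ρ, hMF3 ρ]
    have := hFpos (ρ / 2) (by positivity)
    have := hFpos (2 * ρ / 3) (by positivity)
    nlinarith
  have hlρ : 0 < Real.log ρ := Real.log_pos hρ
  rw [Real.log_mul hρ0.ne' hPρ.ne']
  field_simp
  ring
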